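/- If G' is the underlying simple graph of a multigraph G (obtained by deleting all but one of each set of parallel edges, with no loops present), then md(G) = md(G'). -/

import Mathlib

open SimpleGraph

/-- An edge-coloring `Γ` is a monochromatic disconnection coloring (MD-coloring) of `G`
if every pair of distinct vertices is separated by a monochromatic edge-cut. -/
def IsMDColoring {V : Type*} (G : SimpleGraph V) (Γ : Sym2 V → ℕ) : Prop :=
  ∀ u v : V, u ≠ v → ∃ (c : ℕ) (F : Set (Sym2 V)), F ⊆ G.edgeSet ∧
    (∀ e ∈ F, Γ e = c) ∧ ¬ (G.deleteEdges F).Reachable u v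

/-- The monochromatic disconnection number of `G`: the maximum number of colors
used by an MD-coloring of `G`. -/
noncomputable def md {V : Type*} (G : SimpleGraph V) : ℕ :=
  sSup {n : ℕ | ∃ Γ : Sym2 V → ℕ, IsMDColoring G Γ ∧ (Γ '' G.edgeSet).ncard = n}

/-- A multigraph without loops: an edge type with an endpoints map avoiding loops. -/
structure Multigraph (V : Type*) where
  E : Type*
  ends : E → Sym2 V
  no_loops : ∀ e, ¬ (ends e).IsDiag

/-- The underlying simple graph of a multigraph: keep one copy of each parallel class. -/
def Multigraph.underlying {V : Type*} (M : Multigraph V) : SimpleGraph V where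
  Adj u v := u ≠ v ∧ ∃ e, M.ends e = s(u, v)
  symm := ⟨by
    rintro u v ⟨h, e, he⟩
    exact ⟨h.symm, e, by rw [he, Sym2.eq_swap]⟩⟩
  loopless := ⟨fun v h => h.1 rfl⟩

/-- An MD-coloring of a multigraph: every pair of distinct vertices is separated by a
monochromatic edge-cut (a set of edge instances of one color). -/
def Multigraph.IsMDColoring {V : Type*} (M : Multigraph V) (Γ : M.E → ℕ) : Prop :=
  ∀ u v : V, u ≠ v → ∃ (c : ℕ) (F : Set M.E), (∀ e ∈ F, Γ e = c) ∧
    ¬ (SimpleGraph.fromEdgeSet (M.ends '' {e | e ∉ F})).Reachable u v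

/-- The monochromatic disconnection number of a multigraph. -/
noncomputable def Multigraph.md {V : Type*} (M : Multigraph V) : ℕ :=
  sSup {n : ℕ | ∃ Γ : M.E → ℕ, M.IsMDColoring Γ ∧ (Set.range Γ).ncard = n}

private lemma sym2_rep {V : Type*} (p : Sym2 V) : ∃ a b, p = s(a, b) :=
  Sym2.ind (fun a b => ⟨a, b, rfl⟩) p

private lemma ends_mem_edgeSet {V : Type*} (M : Multigraph V) (e : M.E) :
    M.ends e ∈ M.underlying.edgeSet := by
  obtain ⟨a, b, hab⟩ := sym2_rep (M.ends e)
  have hne : a ≠ b := by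
    intro h
    exact M.no_loops e (by rw [hab, Sym2.mk_isDiag_iff]; exact h)
  rw [hab]
  exact ⟨hne, e, hab⟩

/-- In an MD-coloring of a multigraph, parallel edges get the same color. -/
private lemma parallel_const {V : Type*} {M : Multigraph V} {Γ : M.E → ℕ}
    (hΓ : M.IsMDColoring Γ) {e₁ e₂ : M.E} (h : M.ends e₁ = M.ends e₂) :
    Γ e₁ = Γ e₂ := by
  obtain ⟨a, b, hab⟩ := sym2_rep (M.ends e₁)
  have hne : a ≠ b := by
    intro hx
    exact M.no_loops e₁ (by rw [hab, Sym2.mk_isDiag_iff]; exact hx)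
  obtain ⟨c, F, hmono, hnr⟩ := hΓ a b hne
  have hmem : ∀ e : M.E, M.ends e = s(a, b) → e ∈ F := by
    intro e he
    by_contra hnf
    exact hnr (Adj.reachable (by
      rw [SimpleGraph.fromEdgeSet_adj]
      exact ⟨⟨e, hnf, he⟩, hne⟩))
  rw [hmono e₁ (hmem e₁ hab), hmono e₂ (hmem e₂ (h ▸ hab))]

theorem stmt_0 {V : Type*} [Fintype V] (M : Multigraph V) [Fintype M.E] :
    M.md = md M.underlying := by
  unfold Multigraph.md md
  congr 1
  ext n
  constructor
  · -- multigraph coloring → simple graph coloring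
    rintro ⟨Γ, hΓ, hn⟩
    classical
    refine ⟨fun p => if h : ∃ e, M.ends e = p then Γ h.choose else 0, ?_, ?_⟩
    · intro u v huv
      obtain ⟨c, F', hmono, hnr⟩ := hΓ u v huv
      refine ⟨c, M.ends '' F', ?_, ?_, ?_⟩
      · rintro p ⟨e, _, rfl⟩
        exact ends_mem_edgeSet M e
      · rintro p ⟨e, heF, rfl⟩
        have hex : ∃ e', M.ends e' = M.ends e := ⟨e, rfl⟩
        dsimp only
        rw [dif_pos hex, parallel_const hΓ hex.choose_spec]
        exact hmono e heF
      · intro hr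
        refine hnr (hr.mono ?_)
        intro u v h
        rw [SimpleGraph.deleteEdges_adj] at h
        obtain ⟨⟨hne, e, he⟩, hnF⟩ := h
        rw [SimpleGraph.fromEdgeSet_adj]
        refine ⟨⟨e, ?_, he⟩, hne⟩
        intro heF'
        exact hnF ⟨e, heF', he⟩
    · rw [← hn]
      congr 1
      ext m
      constructor
      · rintro ⟨p, hp, rfl⟩
        obtain ⟨a, b, rfl⟩ := sym2_rep p
        obtain ⟨hne, e, he⟩ := hp
        have hex : ∃ e', M.ends e' = s(a, b) := ⟨e, he⟩
        dsimp only
        rw [dif_pos hex]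
        exact ⟨hex.choose, rfl⟩
      · rintro ⟨e, rfl⟩
        refine ⟨M.ends e, ends_mem_edgeSet M e, ?_⟩
        have hex : ∃ e', M.ends e' = M.ends e := ⟨e, rfl⟩
        dsimp only
        rw [dif_pos hex]
        exact parallel_const hΓ hex.choose_spec
  · -- simple graph coloring → multigraph coloring
    rintro ⟨Γ, hΓ, hn⟩
    refine ⟨fun e => Γ (M.ends e), ?_, ?_⟩
    · intro u v huv
      obtain ⟨c, F, _, hmono, hnr⟩ := hΓ u v huv
      refine ⟨c, {e | M.ends e ∈ F}, fun e he => hmono _ he, ?_⟩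
      intro hr
      refine hnr (hr.mono ?_)
      intro u v hadj
      rw [SimpleGraph.fromEdgeSet_adj] at hadj
      obtain ⟨⟨e, he, hends⟩, hne⟩ := hadj
      rw [SimpleGraph.deleteEdges_adj]
      exact ⟨⟨hne, e, hends⟩, hends ▸ he⟩
    · rw [← hn]
      congr 1
      ext m
      constructor
      · rintro ⟨e, rfl⟩
        exact ⟨M.ends e, ends_mem_edgeSet M e, rfl⟩
      · rintro ⟨p, hp, rfl⟩
        obtain ⟨a, b, rfl⟩ := sym2_rep p
        obtain ⟨hne, e, he⟩ := hp
        exact ⟨e, congrArg Γ he⟩
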